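/- arXiv:1601.03853 — 3 statements merged into one kernel-verified Lean document; each statement's English description precedes it below -/
import Mathlib

section
/- Let A₁ = [[0,−1,0],[−1,0,0],[0,0,0]], A₂ = [[0,0,−1],[0,0,0],[−1,0,0]], ν ∈ ℝ² with |ν| = 1, and A_ν = ν₁A₁ + ν₂A₂. A matrix M ∈ M₃(ℝ) satisfies the four algebraic conditions (i) M = Mᵀ, (ii) M is positive semidefinite, (iii) ker A_ν ⊆ ker M, (iv) ℝ³ = ker(A_ν − M) + ker(A_ν + M), if and only if there exists λ > 0 such that M = [[λ⁻¹,0,0],[0,λν₁²,λν₁ν₂],[0,λν₁ν₂,λν₂²]]. -/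
open Matrix

/-- The first coefficient matrix. -/
def A1 : Matrix (Fin 3) (Fin 3) ℝ := !![0, -1, 0; -1, 0, 0; 0, 0, 0]

/-- The second coefficient matrix. -/
def A2 : Matrix (Fin 3) (Fin 3) ℝ := !![0, 0, -1; 0, 0, 0; -1, 0, 0]

lemma key_scalar (p q r : ℝ)
    (hpsd : ∀ u s : ℝ, 0 ≤ p*u^2 + 2*q*u*s + r*s^2)
    (a1 b1 c1 d1 : ℝ)
    (e11 : p*a1 + (1+q)*b1 = 0) (e12 : (1+q)*a1 + r*b1 = 0)
    (e13 : p*c1 - (1-q)*d1 = 0) (e14 : (1-q)*c1 - r*d1 = 0)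
    (e15 : a1 + c1 = 1) (e16 : b1 + d1 = 0)
    (a2 b2 c2 d2 : ℝ)
    (e21 : p*a2 + (1+q)*b2 = 0) (e22 : (1+q)*a2 + r*b2 = 0)
    (e23 : p*c2 - (1-q)*d2 = 0) (e24 : (1-q)*c2 - r*d2 = 0)
    (e25 : a2 + c2 = 0) (e26 : b2 + d2 = 1) :
    q = 0 ∧ p * r = 1 ∧ 0 < p := by
  by_cases hD1 : p*r - (1+q)^2 = 0
  · by_cases hD2 : p*r - (1-q)^2 = 0
    · have hq : q = 0 := by nlinarith
      have hpr : p*r = 1 := by nlinarith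
      have hp0 : 0 ≤ p := by have := hpsd 1 0; nlinarith
      have hpne : p ≠ 0 := by
        intro h; rw [h] at hpr; simp at hpr
      exact ⟨hq, hpr, lt_of_le_of_ne hp0 (Ne.symm hpne)⟩
    · exfalso
      have hc1 : c1 = 0 := by
        have h : (p*r - (1-q)^2) * c1 = 0 := by linear_combination r*e13 - (1-q)*e14
        exact (mul_eq_zero.mp h).resolve_left hD2
      have hd1 : d1 = 0 := by
        have h : (p*r - (1-q)^2) * d1 = 0 := by linear_combination (1-q)*e13 - p*e14
        exact (mul_eq_zero.mp h).resolve_left hD2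
      have hc2 : c2 = 0 := by
        have h : (p*r - (1-q)^2) * c2 = 0 := by linear_combination r*e23 - (1-q)*e24
        exact (mul_eq_zero.mp h).resolve_left hD2
      have hd2 : d2 = 0 := by
        have h : (p*r - (1-q)^2) * d2 = 0 := by linear_combination (1-q)*e23 - p*e24
        exact (mul_eq_zero.mp h).resolve_left hD2
      have ha1 : a1 = 1 := by linarith
      have hb1 : b1 = 0 := by linarith
      have ha2 : a2 = 0 := by linarith
      have hb2 : b2 = 1 := by linarith
      have hp : p = 0 := by rw [ha1, hb1] at e11; linarith
      have hq : q = -1 := by rw [ha1, hb1] at e12; linarith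
      have hr : r = 0 := by rw [ha2, hb2] at e22; linarith
      have := hpsd 1 1
      rw [hp, hq, hr] at this; linarith
  · exfalso
    have ha1 : a1 = 0 := by
      have h : (p*r - (1+q)^2) * a1 = 0 := by linear_combination r*e11 - (1+q)*e12
      exact (mul_eq_zero.mp h).resolve_left hD1
    have hb1 : b1 = 0 := by
      have h : (p*r - (1+q)^2) * b1 = 0 := by linear_combination p*e12 - (1+q)*e11
      exact (mul_eq_zero.mp h).resolve_left hD1
    have ha2 : a2 = 0 := by
      have h : (p*r - (1+q)^2) * a2 = 0 := by linear_combination r*e21 - (1+q)*e22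
      exact (mul_eq_zero.mp h).resolve_left hD1
    have hb2 : b2 = 0 := by
      have h : (p*r - (1+q)^2) * b2 = 0 := by linear_combination p*e22 - (1+q)*e21
      exact (mul_eq_zero.mp h).resolve_left hD1
    have hc1 : c1 = 1 := by linarith
    have hd1 : d1 = 0 := by linarith
    have hc2 : c2 = 0 := by linarith
    have hd2 : d2 = 1 := by linarith
    have hp : p = 0 := by rw [hc1, hd1] at e13; linarith
    have hq : q = 1 := by rw [hc1, hd1] at e14; linarith
    have hr : r = 0 := by rw [hc2, hd2] at e24; linarith
    have := hpsd 1 (-1)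
    rw [hp, hq, hr] at this; linarith

set_option maxHeartbeats 1600000 in
theorem stmt_12 (ν₁ ν₂ : ℝ) (hν : ν₁ ^ 2 + ν₂ ^ 2 = 1)
    (M : Matrix (Fin 3) (Fin 3) ℝ) :
    (M.IsSymm ∧ M.PosSemidef ∧
      (∀ x : Fin 3 → ℝ, (ν₁ • A1 + ν₂ • A2).mulVec x = 0 → M.mulVec x = 0) ∧
      (∀ x : Fin 3 → ℝ, ∃ y z : Fin 3 → ℝ,
        ((ν₁ • A1 + ν₂ • A2) - M).mulVec y = 0 ∧
        ((ν₁ • A1 + ν₂ • A2) + M).mulVec z = 0 ∧ x = y + z))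
    ↔ ∃ lam : ℝ, 0 < lam ∧
        M = !![lam⁻¹, 0, 0; 0, lam * ν₁ ^ 2, lam * ν₁ * ν₂;
               0, lam * ν₁ * ν₂, lam * ν₂ ^ 2] := by
  constructor
  · rintro ⟨hsym, hpsd, hker, hsum⟩
    have s10 : M 1 0 = M 0 1 := hsym.apply 0 1
    have s20 : M 2 0 = M 0 2 := hsym.apply 0 2
    have s21 : M 2 1 = M 1 2 := hsym.apply 1 2
    have hA : (ν₁ • A1 + ν₂ • A2).mulVec ![0, -ν₂, ν₁] = 0 := by
      funext i
      fin_cases i <;> (simp [A1, A2, Matrix.mulVec, dotProduct, Fin.sum_univ_three]; try ring)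
    have hMn := hker _ hA
    have E0 := congrFun hMn 0
    have E1 := congrFun hMn 1
    have E2 := congrFun hMn 2
    simp [Matrix.mulVec, dotProduct, Fin.sum_univ_three, -mul_eq_zero] at E0 E1 E2
    have h01 : M 0 1 = (ν₁ * M 0 1 + ν₂ * M 0 2) * ν₁ := by
      linear_combination (-(M 0 1)) * hν - ν₂ * E0
    have h02 : M 0 2 = (ν₁ * M 0 1 + ν₂ * M 0 2) * ν₂ := by
      linear_combination (-(M 0 2)) * hν + ν₁ * E0
    have h11 : M 1 1 = (M 1 1 + M 2 2) * ν₁^2 := by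
      linear_combination (-(M 1 1)) * hν - ν₂ * E1 - ν₁ * E2 - ν₁ * ν₂ * s21
    have h12 : M 1 2 = (M 1 1 + M 2 2) * (ν₁*ν₂) := by
      linear_combination (-(M 1 2)) * hν + ν₁ * E1 - ν₂ * E2 - ν₂^2 * s21
    have h22 : M 2 2 = (M 1 1 + M 2 2) * ν₂^2 := by
      linear_combination (-(M 2 2)) * hν + ν₁ * E2 + ν₂ * E1 + ν₁ * ν₂ * s21
    have hq2 : ∀ u s : ℝ, 0 ≤ M 0 0 * u^2 + 2*(ν₁ * M 0 1 + ν₂ * M 0 2)*u*s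
        + (M 1 1 + M 2 2)*s^2 := by
      intro u s
      have h := hpsd.dotProduct_mulVec_nonneg ![u, ν₁ * s, ν₂ * s]
      simp [Matrix.mulVec, dotProduct, Fin.sum_univ_three, -mul_eq_zero] at h
      have eq : u * (M 0 0 * u + M 0 1 * (ν₁ * s) + M 0 2 * (ν₂ * s)) +
          ν₁ * s * (M 1 0 * u + M 1 1 * (ν₁ * s) + M 1 2 * (ν₂ * s)) +
          ν₂ * s * (M 2 0 * u + M 2 1 * (ν₁ * s) + M 2 2 * (ν₂ * s)) =
          M 0 0 * u^2 + 2*(ν₁ * M 0 1 + ν₂ * M 0 2)*u*s + (M 1 1 + M 2 2)*s^2 := by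
        linear_combination (u*ν₁*s)*s10 + (u*ν₂*s)*s20 + (s^2*ν₂)*E1 - (s^2*ν₁)*E2
          + (s^2*(M 1 1 + M 2 2))*hν
      rw [eq] at h
      exact h
    obtain ⟨y, z, hy, hz, hxyz⟩ := hsum ![1, 0, 0]
    have hy0 := congrFun hy 0
    have hy1 := congrFun hy 1
    have hy2 := congrFun hy 2
    have hz0 := congrFun hz 0
    have hz1 := congrFun hz 1
    have hz2 := congrFun hz 2
    have hx0 := congrFun hxyz 0
    have hx1 := congrFun hxyz 1
    have hx2 := congrFun hxyz 2
    simp [A1, A2, Matrix.mulVec, dotProduct, Fin.sum_univ_three, -mul_eq_zero]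
      at hy0 hy1 hy2 hz0 hz1 hz2 hx0 hx1 hx2
    have e11 : M 0 0 * (y 0) + (1 + (ν₁ * M 0 1 + ν₂ * M 0 2)) * (ν₁ * y 1 + ν₂ * y 2) = 0 := by
      linear_combination (-1) * hy0 - y 1 * h01 - y 2 * h02
    have e12 : (1 + (ν₁ * M 0 1 + ν₂ * M 0 2)) * (y 0) + (M 1 1 + M 2 2) * (ν₁ * y 1 + ν₂ * y 2) = 0 := by
      linear_combination (-ν₁) * hy1 - ν₂ * hy2 - (y 0) * hν - ν₁ * (y 0) * s10
        - ν₂ * (y 0) * s20 + (y 1) * E2 - (y 2) * E1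
    have e13 : M 0 0 * (z 0) - (1 - (ν₁ * M 0 1 + ν₂ * M 0 2)) * (ν₁ * z 1 + ν₂ * z 2) = 0 := by
      linear_combination hz0 - z 1 * h01 - z 2 * h02
    have e14 : (1 - (ν₁ * M 0 1 + ν₂ * M 0 2)) * (z 0) - (M 1 1 + M 2 2) * (ν₁ * z 1 + ν₂ * z 2) = 0 := by
      linear_combination (-ν₁) * hz1 - ν₂ * hz2 - (z 0) * hν + ν₁ * (z 0) * s10
        + ν₂ * (z 0) * s20 - (z 1) * E2 + (z 2) * E1
    have e15 : y 0 + z 0 = 1 := by linear_combination -hx0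
    have e16 : (ν₁ * y 1 + ν₂ * y 2) + (ν₁ * z 1 + ν₂ * z 2) = 0 := by
      linear_combination (-ν₁) * hx1 - ν₂ * hx2
    obtain ⟨w, v, hw, hv, hwv⟩ := hsum ![0, ν₁, ν₂]
    have hw0 := congrFun hw 0
    have hw1 := congrFun hw 1
    have hw2 := congrFun hw 2
    have hv0 := congrFun hv 0
    have hv1 := congrFun hv 1
    have hv2 := congrFun hv 2
    have hu0 := congrFun hwv 0
    have hu1 := congrFun hwv 1
    have hu2 := congrFun hwv 2
    simp [A1, A2, Matrix.mulVec, dotProduct, Fin.sum_univ_three, -mul_eq_zero]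
      at hw0 hw1 hw2 hv0 hv1 hv2 hu0 hu1 hu2
    have e21 : M 0 0 * (w 0) + (1 + (ν₁ * M 0 1 + ν₂ * M 0 2)) * (ν₁ * w 1 + ν₂ * w 2) = 0 := by
      linear_combination (-1) * hw0 - w 1 * h01 - w 2 * h02
    have e22 : (1 + (ν₁ * M 0 1 + ν₂ * M 0 2)) * (w 0) + (M 1 1 + M 2 2) * (ν₁ * w 1 + ν₂ * w 2) = 0 := by
      linear_combination (-ν₁) * hw1 - ν₂ * hw2 - (w 0) * hν - ν₁ * (w 0) * s10
        - ν₂ * (w 0) * s20 + (w 1) * E2 - (w 2) * E1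
    have e23 : M 0 0 * (v 0) - (1 - (ν₁ * M 0 1 + ν₂ * M 0 2)) * (ν₁ * v 1 + ν₂ * v 2) = 0 := by
      linear_combination hv0 - v 1 * h01 - v 2 * h02
    have e24 : (1 - (ν₁ * M 0 1 + ν₂ * M 0 2)) * (v 0) - (M 1 1 + M 2 2) * (ν₁ * v 1 + ν₂ * v 2) = 0 := by
      linear_combination (-ν₁) * hv1 - ν₂ * hv2 - (v 0) * hν + ν₁ * (v 0) * s10
        + ν₂ * (v 0) * s20 - (v 1) * E2 + (v 2) * E1
    have e25 : w 0 + v 0 = 0 := by linear_combination -hu0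
    have e26 : (ν₁ * w 1 + ν₂ * w 2) + (ν₁ * v 1 + ν₂ * v 2) = 1 := by
      linear_combination (-ν₁) * hu1 - ν₂ * hu2 + hν
    obtain ⟨hq, hpr, hp⟩ := key_scalar (M 0 0) (ν₁ * M 0 1 + ν₂ * M 0 2) (M 1 1 + M 2 2)
      hq2 (y 0) (ν₁ * y 1 + ν₂ * y 2) (z 0) (ν₁ * z 1 + ν₂ * z 2) e11 e12 e13 e14 e15 e16
      (w 0) (ν₁ * w 1 + ν₂ * w 2) (v 0) (ν₁ * v 1 + ν₂ * v 2) e21 e22 e23 e24 e25 e26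
    have h1 : 0 < M 0 0 * (M 1 1 + M 2 2) := by rw [hpr]; exact one_pos
    have hr : 0 < M 1 1 + M 2 2 := by
      rcases mul_pos_iff.mp h1 with ⟨_, h⟩ | ⟨h, _⟩
      · exact h
      · exact absurd hp (not_lt.mpr h.le)
    refine ⟨M 1 1 + M 2 2, hr, ?_⟩
    ext i j
    fin_cases i <;> fin_cases j <;>
      simp [Matrix.vecHead, Matrix.vecTail]
    · field_simp
      linear_combination hpr
    · linear_combination h01 + ν₁ * hq
    · linear_combination h02 + ν₂ * hq
    · linear_combination s10 + h01 + ν₁ * hq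
    · linear_combination h11
    · linear_combination h12
    · linear_combination s20 + h02 + ν₂ * hq
    · linear_combination s21 + h12
    · linear_combination h22
  · rintro ⟨lam, hlam, rfl⟩
    have hl := hlam.ne'
    refine ⟨?_, ?_, ?_, ?_⟩
    · ext i j
      fin_cases i <;> fin_cases j <;>
        simp [Matrix.transpose_apply, Matrix.vecHead, Matrix.vecTail]
    · refine Matrix.PosSemidef.of_dotProduct_mulVec_nonneg ?_ ?_
      · ext i j
        fin_cases i <;> fin_cases j <;>
          simp [Matrix.conjTranspose_apply, Matrix.vecHead, Matrix.vecTail]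
      · intro x
        simp [Matrix.mulVec, dotProduct, Fin.sum_univ_three, Matrix.vecHead, Matrix.vecTail]
        nlinarith [mul_nonneg hlam.le (sq_nonneg (ν₁ * x 1 + ν₂ * x 2)),
          mul_nonneg (inv_nonneg.mpr hlam.le) (sq_nonneg (x 0))]
    · intro x hx
      have h0 := congrFun hx 0
      have h1 := congrFun hx 1
      have h2 := congrFun hx 2
      simp [A1, A2, Matrix.mulVec, dotProduct, Fin.sum_univ_three, -mul_eq_zero] at h0 h1 h2
      have hx0 : x 0 = 0 := by linear_combination ν₁*h1 + ν₂*h2 - x 0 * hν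
      funext i
      fin_cases i
      · simp [Matrix.mulVec, dotProduct, Fin.sum_univ_three, hx0]
      · simp [Matrix.mulVec, dotProduct, Fin.sum_univ_three, hx0]
        linear_combination -lam*ν₁*h0
      · simp [Matrix.mulVec, dotProduct, Fin.sum_univ_three, hx0, Matrix.vecHead, Matrix.vecTail]
        linear_combination -lam*ν₂*h0
    · intro x
      set t : ℝ := (x 0 + lam * (ν₁ * x 1 + ν₂ * x 2)) / (2 * lam) with htdef
      have ht : 2 * lam * t = x 0 + lam * (ν₁ * x 1 + ν₂ * x 2) := by
        rw [htdef]; field_simp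
      have hinv : lam * lam⁻¹ = 1 := mul_inv_cancel₀ hl
      refine ⟨x - ![lam * t, ν₁ * t, ν₂ * t], ![lam * t, ν₁ * t, ν₂ * t],
        ?_, ?_, (sub_add_cancel x _).symm⟩
      · funext i
        fin_cases i
        · simp [A1, A2, Matrix.mulVec, dotProduct, Fin.sum_univ_three, Matrix.sub_apply,
            Matrix.vecHead, Matrix.vecTail]
          linear_combination lam⁻¹ * ht + ((ν₁ * x 1 + ν₂ * x 2) - t) * hinv + t * hν
        · simp [A1, A2, Matrix.mulVec, dotProduct, Fin.sum_univ_three, Matrix.sub_apply,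
            Matrix.vecHead, Matrix.vecTail]
          linear_combination ν₁ * ht + lam * ν₁ * t * hν
        · simp [A1, A2, Matrix.mulVec, dotProduct, Fin.sum_univ_three, Matrix.sub_apply,
            Matrix.vecHead, Matrix.vecTail]
          linear_combination ν₂ * ht + lam * ν₂ * t * hν
      · funext i
        fin_cases i
        · simp [A1, A2, Matrix.mulVec, dotProduct, Fin.sum_univ_three, Matrix.add_apply,
            Matrix.vecHead, Matrix.vecTail]
          linear_combination t * hinv - t * hν
        · simp [A1, A2, Matrix.mulVec, dotProduct, Fin.sum_univ_three, Matrix.add_apply,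
            Matrix.vecHead, Matrix.vecTail]
          linear_combination lam * ν₁ * t * hν
        · simp [A1, A2, Matrix.mulVec, dotProduct, Fin.sum_univ_three, Matrix.add_apply,
            Matrix.vecHead, Matrix.vecTail]
          linear_combination lam * ν₂ * t * hν
end

section
/- Let A₁ = [[0,−1,0],[−1,0,0],[0,0,0]], A₂ = [[0,0,−1],[0,0,0],[−1,0,0]], ν a unit vector of ℝ², A_ν = ν₁A₁ + ν₂A₂, λ > 0, and M = [[λ⁻¹,0,0],[0,λν₁²,λν₁ν₂],[0,λν₁ν₂,λν₂²]]. Then both ker(A_ν − M) and ker(A_ν + M) are 2-dimensional subspaces of ℝ³, and ker(A_ν − M) + ker(A_ν + M) = ℝ³. -/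
open Matrix

theorem stmt_13 (ν₁ ν₂ : ℝ) (hν : ν₁ ^ 2 + ν₂ ^ 2 = 1) (lam : ℝ) (hlam : 0 < lam)
    (M : Matrix (Fin 3) (Fin 3) ℝ)
    (hM : M = !![lam⁻¹, 0, 0; 0, lam * ν₁ ^ 2, lam * ν₁ * ν₂;
                 0, lam * ν₁ * ν₂, lam * ν₂ ^ 2]) :
    Module.finrank ℝ (LinearMap.ker ((ν₁ • A1 + ν₂ • A2) - M).mulVecLin) = 2 ∧
    Module.finrank ℝ (LinearMap.ker ((ν₁ • A1 + ν₂ • A2) + M).mulVecLin) = 2 ∧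
    LinearMap.ker ((ν₁ • A1 + ν₂ • A2) - M).mulVecLin ⊔
      LinearMap.ker ((ν₁ • A1 + ν₂ • A2) + M).mulVecLin = ⊤ := by
  have hl : lam ≠ 0 := ne_of_gt hlam
  subst hM
  -- kernel characterizations
  have hker1 : ∀ x : Fin 3 → ℝ,
      x ∈ LinearMap.ker ((ν₁ • A1 + ν₂ • A2) -
        !![lam⁻¹, 0, 0; 0, lam * ν₁ ^ 2, lam * ν₁ * ν₂;
           0, lam * ν₁ * ν₂, lam * ν₂ ^ 2]).mulVecLin ↔
      x 0 + lam * ν₁ * x 1 + lam * ν₂ * x 2 = 0 := by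
    intro x
    simp only [A1, A2, LinearMap.mem_ker, mulVecLin_apply]
    simp [mulVec, dotProduct, Fin.sum_univ_three, funext_iff, Fin.forall_fin_succ,
      Matrix.cons_val_two, Matrix.vecTail, Matrix.vecHead]
    constructor
    · rintro ⟨h0, -, -⟩
      field_simp at h0
      linear_combination -h0
    · intro h
      refine ⟨?_, ?_, ?_⟩
      · field_simp
        linear_combination -h
      · linear_combination (-ν₁) * h
      · linear_combination (-ν₂) * h
  have hker2 : ∀ x : Fin 3 → ℝ,
      x ∈ LinearMap.ker ((ν₁ • A1 + ν₂ • A2) +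
        !![lam⁻¹, 0, 0; 0, lam * ν₁ ^ 2, lam * ν₁ * ν₂;
           0, lam * ν₁ * ν₂, lam * ν₂ ^ 2]).mulVecLin ↔
      x 0 - lam * ν₁ * x 1 - lam * ν₂ * x 2 = 0 := by
    intro x
    simp only [A1, A2, LinearMap.mem_ker, mulVecLin_apply]
    simp [mulVec, dotProduct, Fin.sum_univ_three, funext_iff, Fin.forall_fin_succ,
      Matrix.cons_val_two, Matrix.vecTail, Matrix.vecHead]
    constructor
    · rintro ⟨h0, -, -⟩
      field_simp at h0
      linear_combination h0
    · intro h
      refine ⟨?_, ?_, ?_⟩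
      · field_simp
        linear_combination h
      · linear_combination (-ν₁) * h
      · linear_combination (-ν₂) * h
  -- linear functionals
  let f : (Fin 3 → ℝ) →ₗ[ℝ] ℝ := LinearMap.proj 0 + (lam * ν₁) • LinearMap.proj 1 +
    (lam * ν₂) • LinearMap.proj 2
  let g : (Fin 3 → ℝ) →ₗ[ℝ] ℝ := LinearMap.proj 0 - (lam * ν₁) • LinearMap.proj 1 -
    (lam * ν₂) • LinearMap.proj 2
  have hf : ∀ x : Fin 3 → ℝ, f x = x 0 + lam * ν₁ * x 1 + lam * ν₂ * x 2 := by
    intro x; simp [f]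
  have hg : ∀ x : Fin 3 → ℝ, g x = x 0 - lam * ν₁ * x 1 - lam * ν₂ * x 2 := by
    intro x; simp [g]
  have hkf : LinearMap.ker ((ν₁ • A1 + ν₂ • A2) -
        !![lam⁻¹, 0, 0; 0, lam * ν₁ ^ 2, lam * ν₁ * ν₂;
           0, lam * ν₁ * ν₂, lam * ν₂ ^ 2]).mulVecLin = LinearMap.ker f := by
    ext x; rw [hker1 x, LinearMap.mem_ker, hf]
  have hkg : LinearMap.ker ((ν₁ • A1 + ν₂ • A2) +
        !![lam⁻¹, 0, 0; 0, lam * ν₁ ^ 2, lam * ν₁ * ν₂;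
           0, lam * ν₁ * ν₂, lam * ν₂ ^ 2]).mulVecLin = LinearMap.ker g := by
    ext x; rw [hker2 x, LinearMap.mem_ker, hg]
  have frank : ∀ (h : (Fin 3 → ℝ) →ₗ[ℝ] ℝ), h ![1, 0, 0] = 1 →
      Module.finrank ℝ (LinearMap.ker h) = 2 := by
    intro h hh
    have hsurj : LinearMap.range h = ⊤ := by
      rw [LinearMap.range_eq_top]
      intro r
      exact ⟨r • ![1, 0, 0], by rw [_root_.map_smul, hh, smul_eq_mul, mul_one]⟩
    have := LinearMap.finrank_range_add_finrank_ker h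
    rw [hsurj] at this
    simp [Module.finrank_pi, finrank_top] at this
    omega
  refine ⟨?_, ?_, ?_⟩
  · rw [hkf]
    exact frank f (by rw [hf]; norm_num; exact Or.inr rfl)
  · rw [hkg]
    exact frank g (by rw [hg]; norm_num; exact Or.inr rfl)
  · rw [hkf, hkg, eq_top_iff]
    intro x _
    set c : ℝ := (f x) / (2 * lam) with hc
    refine Submodule.mem_sup.mpr ⟨x - c • ![lam, ν₁, ν₂], ?_, c • ![lam, ν₁, ν₂], ?_, by abel⟩
    · rw [LinearMap.mem_ker, map_sub, _root_.map_smul]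
      simp only [hf, smul_eq_mul, Matrix.cons_val_zero, Matrix.cons_val_one, Matrix.head_cons,
        Matrix.cons_val_two, Matrix.vecTail, Matrix.vecHead, Function.comp_apply]
      rw [hc, hf]
      field_simp
      simp only [Matrix.cons_val_succ, Matrix.cons_val_zero]
      linear_combination (-(x 0 + lam * ν₁ * x 1 + lam * ν₂ * x 2)) * hν
    · rw [LinearMap.mem_ker, _root_.map_smul, hg]
      simp only [smul_eq_mul, Matrix.cons_val_zero, Matrix.cons_val_one, Matrix.head_cons,
        Matrix.cons_val_two, Matrix.vecTail, Matrix.vecHead, Function.comp_apply,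
        Matrix.cons_val_succ]
      linear_combination (-(c * lam)) * hν
end

section
/- Let n ≥ 1, ν ∈ ℝ^n a unit vector, λ > 0. Set A_ν = Σᵢ νᵢ Aᵢ with Aᵢ = −2e₁ ⊙ e_{i+1} ∈ M_{n+1}(ℝ), and M = λ⁻¹ e₁⊗e₁ + λ Σ_{i,j} νᵢνⱼ e_{i+1} ⊙ e_{j+1}. Then ℝ^{n+1} decomposes as the direct sum ker A_ν ⊕ (ker(A_ν − M) ∩ im A_ν) ⊕ (ker(A_ν + M) ∩ im A_ν), and for κ = (k, τ) ∈ ℝ × ℝ^n the three components of κ are κ⁰ = (0, τ − (τ·ν)ν), κ⁻ = ((k − λτ·ν)/2, ((τ·ν)/2 − k/(2λ))ν), κ⁺ = ((k + λτ·ν)/2, ((τ·ν)/2 + k/(2λ))ν). -/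
open Matrix

/-- Symmetric tensor product of two vectors, as a matrix: `a ⊙ b = (a ⊗ b + b ⊗ a)/2`. -/
noncomputable def symOuter {m : Type*} [Fintype m] (a b : m → ℝ) : Matrix m m ℝ :=
  (2 : ℝ)⁻¹ • (vecMulVec a b + vecMulVec b a)

/-- The canonical basis vector `e j` of `ℝ^{n+1}`. -/
noncomputable def e {n : ℕ} (j : Fin (n + 1)) : Fin (n + 1) → ℝ := Pi.single j 1

/-- The matrices `Aᵢ = -2 e₁ ⊙ e_{i+1}`. -/
noncomputable def A {n : ℕ} (i : Fin n) : Matrix (Fin (n + 1)) (Fin (n + 1)) ℝ :=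
  (-2 : ℝ) • symOuter (e 0) (e i.succ)

/-- The boundary matrix `A_ν = Σᵢ νᵢ Aᵢ`. -/
noncomputable def Anu {n : ℕ} (ν : Fin n → ℝ) : Matrix (Fin (n + 1)) (Fin (n + 1)) ℝ :=
  ∑ i : Fin n, ν i • A i

/-- The matrix `M = λ⁻¹ e₁ ⊗ e₁ + λ Σᵢⱼ νᵢνⱼ e_{i+1} ⊙ e_{j+1}`. -/
noncomputable def Mmat {n : ℕ} (lam : ℝ) (ν : Fin n → ℝ) :
    Matrix (Fin (n + 1)) (Fin (n + 1)) ℝ :=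
  lam⁻¹ • vecMulVec (e 0) (e 0) +
    lam • ∑ i : Fin n, ∑ j : Fin n, (ν i * ν j) • symOuter (e i.succ) (e j.succ)

lemma vmv_mulVec {m : Type*} [Fintype m] (a b v : m → ℝ) :
    (vecMulVec a b).mulVec v = (b ⬝ᵥ v) • a := by
  funext i
  simp [vecMulVec_apply, mulVec, dotProduct, Finset.mul_sum, mul_assoc, mul_comm, mul_left_comm]

lemma e_dot {n : ℕ} (j : Fin (n+1)) (v : Fin (n+1) → ℝ) : (e j) ⬝ᵥ v = v j := by
  simp [e, dotProduct, Pi.single_apply]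

lemma symOuter_mulVec {n : ℕ} (a b v : Fin (n+1) → ℝ) :
    (symOuter a b).mulVec v = (2:ℝ)⁻¹ • ((b ⬝ᵥ v) • a + (a ⬝ᵥ v) • b) := by
  simp [symOuter, Matrix.add_mulVec, Matrix.smul_mulVec, vmv_mulVec]

lemma Anu_mulVec {n : ℕ} (ν : Fin n → ℝ) (v : Fin (n+1) → ℝ) :
    (Anu ν).mulVec v = -(∑ j, v j.succ * ν j) • e 0 + (-v 0) • (Fin.cons 0 ν : Fin (n+1) → ℝ) := by
  have h : (Anu ν).mulVec v = ∑ i : Fin n, ν i • ((A i).mulVec v) := by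
    rw [Anu]
    funext x
    simp only [mulVec, dotProduct, Finset.sum_apply, Pi.smul_apply, Matrix.smul_apply,
      smul_eq_mul, Finset.mul_sum, Matrix.sum_apply, Finset.sum_mul]
    rw [Finset.sum_comm]
    refine Finset.sum_congr rfl fun y _ => Finset.sum_congr rfl fun i _ => by ring
  rw [h]
  have hA : ∀ i : Fin n, (A i).mulVec v = (-v i.succ) • e 0 + (-v 0) • e i.succ := by
    intro i
    rw [A, Matrix.smul_mulVec, symOuter_mulVec, e_dot, e_dot]
    funext x
    simp only [Pi.smul_apply, Pi.add_apply, smul_eq_mul, Pi.neg_apply]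
    ring
  simp only [hA]
  funext x
  simp only [Finset.sum_apply, Pi.smul_apply, Pi.add_apply, smul_eq_mul, Pi.neg_apply]
  rw [show (∑ x_1 : Fin n, ν x_1 * (-v x_1.succ * e 0 x + -v 0 * e x_1.succ x))
      = (∑ x_1 : Fin n, ν x_1 * (-v x_1.succ * e 0 x)) + ∑ x_1 : Fin n, ν x_1 * (-v 0 * e x_1.succ x) by
    rw [← Finset.sum_add_distrib]; congr 1; ext j; ring]
  congr 1
  · rw [neg_mul, Finset.sum_mul, ← Finset.sum_neg_distrib]
    congr 1; ext j; ring
  · rw [show (∑ x_1 : Fin n, ν x_1 * (-v 0 * e x_1.succ x)) = -v 0 * ∑ x_1 : Fin n, ν x_1 * e x_1.succ x by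
      rw [Finset.mul_sum]; congr 1; ext j; ring]
    congr 1
    rcases Fin.eq_zero_or_eq_succ x with hx | ⟨y, hy⟩
    · subst hx; simp [e, Pi.single_apply, Fin.succ_ne_zero]
    · subst hy
      rw [Finset.sum_eq_single y
        (fun b _ hb => by simp [e, Pi.single_apply, (Fin.succ_injective n).ne hb])
        (by simp)]
      simp [e]

lemma nue_dot {n : ℕ} (ν : Fin n → ℝ) (v : Fin (n+1) → ℝ) :
    (Fin.cons 0 ν : Fin (n+1) → ℝ) ⬝ᵥ v = ∑ j, v j.succ * ν j := by
  simp [dotProduct, Fin.sum_univ_succ, mul_comm]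

lemma cons_combo {n : ℕ} (ν : Fin n → ℝ) (a c : ℝ) :
    (Fin.cons a (fun i => c * ν i) : Fin (n+1) → ℝ)
      = a • e 0 + c • (Fin.cons 0 ν : Fin (n+1) → ℝ) := by
  funext x
  rcases Fin.eq_zero_or_eq_succ x with hx | ⟨y, hy⟩
  · subst hx; simp [e]
  · subst hy; simp [e, Pi.single_apply, Fin.succ_ne_zero]

lemma g_combo {n : ℕ} (ν : Fin n → ℝ) (hνν : ∑ j, ν j * ν j = 1) (a c : ℝ) :
    ∑ j, ((a • e 0 + c • (Fin.cons 0 ν : Fin (n+1) → ℝ) : Fin (n+1) → ℝ)) j.succ * ν j = c := by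
  have h : ∀ j : Fin n, ((a • e 0 + c • (Fin.cons 0 ν : Fin (n+1) → ℝ) : Fin (n+1) → ℝ)) j.succ * ν j
      = c * (ν j * ν j) := by
    intro j
    simp only [Pi.add_apply, Pi.smul_apply, smul_eq_mul, e, Pi.single_apply,
      Fin.cons_succ]
    rw [if_neg (Fin.succ_ne_zero j)]
    ring
  rw [Finset.sum_congr rfl fun j _ => h j, ← Finset.mul_sum, hνν, mul_one]

lemma Anu_combo {n : ℕ} (ν : Fin n → ℝ) (hνν : ∑ j, ν j * ν j = 1) (a c : ℝ) :
    (Anu ν).mulVec (a • e 0 + c • (Fin.cons 0 ν : Fin (n+1) → ℝ))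
      = (-c) • e 0 + (-a) • (Fin.cons 0 ν : Fin (n+1) → ℝ) := by
  rw [Anu_mulVec, g_combo ν hνν a c]
  have h0 : ((a • e 0 + c • (Fin.cons 0 ν : Fin (n+1) → ℝ) : Fin (n+1) → ℝ)) 0 = a := by
    simp [e]
  rw [h0]

lemma sum_nu_e {n : ℕ} (ν : Fin n → ℝ) (x : Fin (n+1)) :
    ∑ i : Fin n, ν i * e i.succ x = (Fin.cons 0 ν : Fin (n+1) → ℝ) x := by
  rcases Fin.eq_zero_or_eq_succ x with hx | ⟨y, hy⟩
  · subst hx; simp [e, Pi.single_apply, Fin.succ_ne_zero]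
  · subst hy
    rw [Finset.sum_eq_single y
      (fun b _ hb => by simp [e, Pi.single_apply, (Fin.succ_injective n).ne hb])
      (by simp)]
    simp [e]

lemma Mmat_eq {n : ℕ} (lam : ℝ) (ν : Fin n → ℝ) :
    Mmat lam ν = lam⁻¹ • vecMulVec (e 0) (e 0) +
      lam • vecMulVec (Fin.cons 0 ν : Fin (n+1) → ℝ) (Fin.cons 0 ν : Fin (n+1) → ℝ) := by
  rw [Mmat]
  congr 1
  congr 1
  ext x y
  have hx := sum_nu_e ν x
  have hy := sum_nu_e ν y
  simp only [Matrix.sum_apply, Matrix.smul_apply, symOuter, Matrix.add_apply,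
    vecMulVec_apply, smul_eq_mul, Pi.smul_apply]
  rw [← hx, ← hy, Finset.sum_mul_sum]
  have hswap : ∑ i : Fin n, ∑ j : Fin n, (ν j * e j.succ x) * (ν i * e i.succ y)
      = ∑ j : Fin n, ∑ i : Fin n, (ν j * e j.succ x) * (ν i * e i.succ y) :=
    Finset.sum_comm
  calc ∑ i : Fin n, ∑ j : Fin n,
        (ν i * ν j * (2⁻¹ * (e i.succ x * e j.succ y + e j.succ x * e i.succ y)))
      = ∑ i : Fin n, ∑ j : Fin n, (2⁻¹ * ((ν i * e i.succ x) * (ν j * e j.succ y))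
          + 2⁻¹ * ((ν j * e j.succ x) * (ν i * e i.succ y))) :=
        Finset.sum_congr rfl fun i _ => Finset.sum_congr rfl fun j _ => by ring
    _ = 2⁻¹ * (∑ i : Fin n, ∑ j : Fin n, (ν i * e i.succ x) * (ν j * e j.succ y))
          + 2⁻¹ * (∑ i : Fin n, ∑ j : Fin n, (ν j * e j.succ x) * (ν i * e i.succ y)) := by
        simp only [Finset.sum_add_distrib, Finset.mul_sum]
    _ = ∑ i : Fin n, ∑ j : Fin n, (ν i * e i.succ x) * (ν j * e j.succ y) := by
        rw [hswap]; ring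

lemma combo_zero {n : ℕ} (ν : Fin n → ℝ) (a c : ℝ) :
    ((a • e 0 + c • (Fin.cons 0 ν : Fin (n+1) → ℝ) : Fin (n+1) → ℝ)) 0 = a := by
  simp [e]

lemma Mmat_combo {n : ℕ} (lam : ℝ) (ν : Fin n → ℝ) (hνν : ∑ j, ν j * ν j = 1) (a c : ℝ) :
    (Mmat lam ν).mulVec (a • e 0 + c • (Fin.cons 0 ν : Fin (n+1) → ℝ))
      = (lam⁻¹ * a) • e 0 + (lam * c) • (Fin.cons 0 ν : Fin (n+1) → ℝ) := by
  rw [Mmat_eq, Matrix.add_mulVec, Matrix.smul_mulVec, Matrix.smul_mulVec,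
    vmv_mulVec, vmv_mulVec, e_dot, nue_dot, combo_zero, g_combo ν hνν a c,
    smul_smul, smul_smul]

lemma g_neg {n : ℕ} (ν : Fin n → ℝ) (f : Fin (n+1) → ℝ) :
    ∑ j, (-f : Fin (n+1) → ℝ) j.succ * ν j = -∑ j, f j.succ * ν j := by
  simp only [Pi.neg_apply, neg_mul]
  rw [Finset.sum_neg_distrib]

theorem stmt_15 (n : ℕ) (hn : 1 ≤ n) (ν : Fin n → ℝ) (hν : ∑ i, ν i ^ 2 = 1)
    (lam : ℝ) (hlam : 0 < lam) :
    -- the three subspaces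
    let K0 : Submodule ℝ (Fin (n + 1) → ℝ) := LinearMap.ker (Anu ν).mulVecLin
    let K1 : Submodule ℝ (Fin (n + 1) → ℝ) :=
      LinearMap.ker (Anu ν - Mmat lam ν).mulVecLin ⊓ LinearMap.range (Anu ν).mulVecLin
    let K2 : Submodule ℝ (Fin (n + 1) → ℝ) :=
      LinearMap.ker (Anu ν + Mmat lam ν).mulVecLin ⊓ LinearMap.range (Anu ν).mulVecLin
    -- independence of the three subspaces (direct sum)
    (∀ x y z : Fin (n + 1) → ℝ, x ∈ K0 → y ∈ K1 → z ∈ K2 →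
        x + y + z = 0 → x = 0 ∧ y = 0 ∧ z = 0) ∧
    -- decomposition of any `κ = (k, τ)` with the explicit components
    ∀ k : ℝ, ∀ τ : Fin n → ℝ,
      let κ : Fin (n + 1) → ℝ := Fin.cons k τ
      let κ0 : Fin (n + 1) → ℝ := Fin.cons 0 (fun i => τ i - (∑ j, τ j * ν j) * ν i)
      let κm : Fin (n + 1) → ℝ :=
        Fin.cons ((k - lam * ∑ j, τ j * ν j) / 2)
          (fun i => ((∑ j, τ j * ν j) / 2 - k / (2 * lam)) * ν i)
      let κp : Fin (n + 1) → ℝ :=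
        Fin.cons ((k + lam * ∑ j, τ j * ν j) / 2)
          (fun i => ((∑ j, τ j * ν j) / 2 + k / (2 * lam)) * ν i)
      κ = κ0 + κm + κp ∧ κ0 ∈ K0 ∧ κm ∈ K1 ∧ κp ∈ K2 := by
  intro K0 K1 K2
  have hl0 : lam ≠ 0 := ne_of_gt hlam
  have hνν : ∑ j, ν j * ν j = 1 := by simpa [pow_two] using hν
  have νedef : True := trivial
  constructor
  · -- independence
    intro x y z hx hy hz hsum
    obtain ⟨hy1, wy, hwy⟩ := hy
    obtain ⟨hz1, wz, hwz⟩ := hz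
    -- representations
    have hyrep : y = (-(∑ j, wy j.succ * ν j)) • e 0 + (-(wy 0)) • (Fin.cons 0 ν : Fin (n+1) → ℝ) := by
      rw [← hwy, Matrix.mulVecLin_apply, Anu_mulVec]
    have hzrep : z = (-(∑ j, wz j.succ * ν j)) • e 0 + (-(wz 0)) • (Fin.cons 0 ν : Fin (n+1) → ℝ) := by
      rw [← hwz, Matrix.mulVecLin_apply, Anu_mulVec]
    set ay := -(∑ j, wy j.succ * ν j)
    set cy := -(wy 0)
    set az := -(∑ j, wz j.succ * ν j)
    set cz := -(wz 0)
    -- kernel conditions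
    have hy1' : (Anu ν).mulVec y = (Mmat lam ν).mulVec y := by
      have h := LinearMap.mem_ker.mp hy1
      rw [Matrix.mulVecLin_apply, Matrix.sub_mulVec, sub_eq_zero] at h
      exact h
    have hz1' : (Anu ν).mulVec z = -((Mmat lam ν).mulVec z) := by
      have h := LinearMap.mem_ker.mp hz1
      rw [Matrix.mulVecLin_apply, Matrix.add_mulVec, add_eq_zero_iff_eq_neg] at h
      exact h
    rw [hyrep, Anu_combo ν hνν, Mmat_combo lam ν hνν] at hy1'
    rw [hzrep, Anu_combo ν hνν, Mmat_combo lam ν hνν] at hz1'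
    have ey1 : -cy = lam⁻¹ * ay := by
      have h := congrArg (fun v => v 0) hy1'
      simpa only [combo_zero ν] using h
    have ey2 : -ay = lam * cy := by
      have h := congrArg (fun v => ∑ j, v j.succ * ν j) hy1'
      simpa only [g_combo ν hνν] using h
    have ez1 : -cz = -(lam⁻¹ * az) := by
      have h := congrArg (fun v => v 0) hz1'
      simpa only [Pi.neg_apply, combo_zero ν] using h
    have ez2 : -az = -(lam * cz) := by
      have h := congrArg (fun v => ∑ j, v j.succ * ν j) hz1'
      simpa only [g_neg ν, g_combo ν hνν] using h
    -- kernel condition for x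
    have hxe : (-(∑ j, x j.succ * ν j)) • e 0 + (-(x 0)) • (Fin.cons 0 ν : Fin (n+1) → ℝ) = 0 := by
      have h := LinearMap.mem_ker.mp hx
      rw [Matrix.mulVecLin_apply, Anu_mulVec] at h
      exact h
    have hx0 : x 0 = 0 := by
      have h := congrArg (fun v => ∑ j, v j.succ * ν j) hxe
      have h2 : ∑ j, (0 : Fin (n+1) → ℝ) j.succ * ν j = 0 := by simp
      simp only [g_combo ν hνν, h2] at h
      linarith
    have hgx : ∑ j, x j.succ * ν j = 0 := by
      have h := congrArg (fun v => v 0) hxe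
      simp only [combo_zero ν, Pi.zero_apply] at h
      linarith
    -- evaluate the sum relation
    have hsum0 : ay + az = 0 := by
      have h : x 0 + y 0 + z 0 = 0 := by
        have hc := congrArg (fun v => v 0) hsum
        simpa only [Pi.add_apply, Pi.zero_apply] using hc
      rw [hx0, hyrep, hzrep, combo_zero ν, combo_zero ν] at h
      linarith
    have hsumg : cy + cz = 0 := by
      have h : (∑ j, x j.succ * ν j) + (∑ j, y j.succ * ν j) + (∑ j, z j.succ * ν j) = 0 := by
        have hc := congrArg (fun v => ∑ j, v j.succ * ν j) hsum
        simp only [Pi.add_apply, Pi.zero_apply, zero_mul, Finset.sum_const_zero] at hc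
        rw [← hc, ← Finset.sum_add_distrib, ← Finset.sum_add_distrib]
        exact Finset.sum_congr rfl fun j _ => by ring
      rw [hgx, hyrep, hzrep, g_combo ν hνν, g_combo ν hνν] at h
      linarith
    -- solve the scalar system
    have hay : ay = 0 := by
      have h1 : cy = -(lam⁻¹ * ay) := by linarith
      have h2 : cz = lam⁻¹ * az := by linarith
      have h3 : az = ay := by
        have hh : lam⁻¹ * az - lam⁻¹ * ay = 0 := by
          rw [h1, h2] at hsumg; linarith
        have h6 : lam⁻¹ * (az - ay) = 0 := by rw [mul_sub]; linarith
        rcases mul_eq_zero.mp h6 with h | h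
        · exact absurd h (inv_ne_zero hl0)
        · linarith
      linarith
    have haz : az = 0 := by linarith
    have hcy : cy = 0 := by
      have := ey2; rw [hay] at this
      have : lam * cy = 0 := by linarith
      rcases mul_eq_zero.mp this with h | h
      · exact absurd h hl0
      · exact h
    have hcz : cz = 0 := by linarith
    have hy0 : y = 0 := by rw [hyrep, hay, hcy]; simp
    have hz0 : z = 0 := by rw [hzrep, haz, hcz]; simp
    refine ⟨?_, hy0, hz0⟩
    have := hsum
    rw [hy0, hz0] at this
    simpa using this
  · -- decomposition
    intro k τ κ κ0 κm κp
    set s := ∑ j, τ j * ν j with hs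
    have hsum0 : ∑ j, (τ j - s * ν j) * ν j = 0 := by
      have h : ∑ j, (τ j - s * ν j) * ν j = (∑ j, τ j * ν j) - s * ∑ j, ν j * ν j := by
        rw [Finset.mul_sum, ← Finset.sum_sub_distrib]
        exact Finset.sum_congr rfl fun j _ => by ring
      rw [h, hνν, ← hs]; ring
    refine ⟨?_, ?_, ?_, ?_⟩
    · funext x
      rcases Fin.eq_zero_or_eq_succ x with hx | ⟨j, hj⟩
      · subst hx
        show k = 0 + (k - lam * s)/2 + (k + lam * s)/2
        ring
      · subst hj
        show τ j = (τ j - s * ν j) + (s/2 - k/(2*lam)) * ν j + (s/2 + k/(2*lam)) * ν j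
        ring
    · -- κ0 ∈ K0
      show (Anu ν).mulVecLin κ0 = 0
      rw [Matrix.mulVecLin_apply, Anu_mulVec]
      have h1 : ∑ j, κ0 j.succ * ν j = 0 := by
        simpa [κ0, Fin.cons_succ] using hsum0
      have h2 : κ0 0 = 0 := rfl
      rw [h1, h2]
      simp
    · -- κm ∈ K1
      have hrep : κm = ((k - lam * s)/2) • e 0 + (s/2 - k/(2*lam)) • (Fin.cons 0 ν : Fin (n+1) → ℝ) :=
        cons_combo ν _ _
      constructor
      · show (Anu ν - Mmat lam ν).mulVecLin κm = 0
        rw [Matrix.mulVecLin_apply, Matrix.sub_mulVec, hrep,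
          Anu_combo ν hνν, Mmat_combo lam ν hνν]
        have s1 : -(s/2 - k/(2*lam)) = lam⁻¹ * ((k - lam * s)/2) := by
          field_simp; ring
        have s2 : -((k - lam * s)/2) = lam * (s/2 - k/(2*lam)) := by
          field_simp; ring
        rw [s1, s2, sub_self]
      · refine ⟨Fin.cons (-(s/2 - k/(2*lam))) (fun i => (-((k - lam * s)/2)) * ν i), ?_⟩
        rw [Matrix.mulVecLin_apply, cons_combo ν, Anu_combo ν hνν, neg_neg, neg_neg,
          ← hrep]
    · -- κp ∈ K2
      have hrep : κp = ((k + lam * s)/2) • e 0 + (s/2 + k/(2*lam)) • (Fin.cons 0 ν : Fin (n+1) → ℝ) :=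
        cons_combo ν _ _
      constructor
      · show (Anu ν + Mmat lam ν).mulVecLin κp = 0
        rw [Matrix.mulVecLin_apply, Matrix.add_mulVec, hrep,
          Anu_combo ν hνν, Mmat_combo lam ν hνν]
        have s1 : lam⁻¹ * ((k + lam * s)/2) = s/2 + k/(2*lam) := by
          field_simp; ring
        have s2 : lam * (s/2 + k/(2*lam)) = (k + lam * s)/2 := by
          field_simp; ring
        rw [s1, s2]
        simp only [neg_smul]
        abel
      · refine ⟨Fin.cons (-(s/2 + k/(2*lam))) (fun i => (-((k + lam * s)/2)) * ν i), ?_⟩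
        rw [Matrix.mulVecLin_apply, cons_combo ν, Anu_combo ν hνν, neg_neg, neg_neg,
          ← hrep]
end
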